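/- Let (G,σ) be a binary-explainable BMG with binary-refinable tree (T,σ). A binary tree (T',σ) on the vertex set of G explains (G,σ) if and only if (T',σ) is a refinement of (T,σ). -/

import Mathlib

/-- A rooted phylogenetic tree with leaf set `V`, encoded by its hierarchy of clusters
(the cluster of a vertex is the set of leaves below it; inner vertices of a phylogenetic
tree have at least two children, so vertices correspond bijectively to clusters). -/
structure PhyloTree (V : Type*) where
  clusters : Set (Set V)
  nonempty_of_mem : ∀ A ∈ clusters, A.Nonempty
  univ_mem : Set.univ ∈ clusters
  singleton_mem : ∀ v : V, {v} ∈ clusters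
  nested : ∀ A ∈ clusters, ∀ B ∈ clusters, A ⊆ B ∨ B ⊆ A ∨ Disjoint A B

namespace PhyloTree

variable {V : Type*}

/-- The cluster of the last common ancestor of `x` and `y`: the smallest cluster
containing both (the clusters containing `x` and `y` form a chain, so their
intersection is the smallest one). -/
def lca (T : PhyloTree V) (x y : V) : Set V :=
  ⋂₀ {A | A ∈ T.clusters ∧ x ∈ A ∧ y ∈ A}

/-- The rooted triple `xy|z` (on three pairwise distinct leaves) is displayed by `T`:
`lca(x,y) ≺ lca(x,z) = lca(y,z)`. -/
def Displays (T : PhyloTree V) (x y z : V) : Prop :=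
  x ≠ y ∧ x ≠ z ∧ y ≠ z ∧ T.lca x y ⊂ T.lca x z ∧ T.lca x z = T.lca y z

/-- `T` displays every triple of `R`; a triple `(x, y, z)` encodes `xy|z`. -/
def DisplaysSet (T : PhyloTree V) (R : Set (V × V × V)) : Prop :=
  ∀ t ∈ R, T.Displays t.1 t.2.1 t.2.2

/-- `r(T)`, the set of triples displayed by `T`. -/
def triples (T : PhyloTree V) : Set (V × V × V) :=
  {t | T.Displays t.1 t.2.1 t.2.2}

/-- `T` is binary: every inner vertex (cluster with at least two leaves) has exactly
two children, i.e. splits into two disjoint proper subclusters. -/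
def IsBinary (T : PhyloTree V) : Prop :=
  ∀ A ∈ T.clusters, 1 < A.ncard →
    ∃ B ∈ T.clusters, ∃ D ∈ T.clusters,
      Disjoint B D ∧ B ∪ D = A ∧ B ⊂ A ∧ D ⊂ A

/-- `T'` is a refinement of `T`: they have the same leaf set and `T` is obtained from
`T'` by contracting inner edges, i.e. every cluster of `T` is a cluster of `T'`. -/
def Refines (T' T : PhyloTree V) : Prop :=
  T.clusters ⊆ T'.clusters

end PhyloTree

section BMG

variable {V C : Type*}

/-- `y` is a best match of `x` in the leaf-colored tree `(T,σ)`. -/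
def bestMatch (T : PhyloTree V) (σ : V → C) (x y : V) : Prop :=
  σ x ≠ σ y ∧ ∀ y' : V, σ y' = σ y → T.lca x y ⊆ T.lca x y'

/-- The leaf-colored tree `(T,σ)` explains the vertex-colored digraph `(E,σ)`,
i.e. `(E,σ)` is the best match graph of `(T,σ)`. -/
def Explains (T : PhyloTree V) (σ : V → C) (E : V → V → Prop) : Prop :=
  ∀ x y, E x y ↔ bestMatch T σ x y

/-- `(E,σ)` is a best match graph. -/
def IsBMG (E : V → V → Prop) (σ : V → C) : Prop :=
  ∃ T : PhyloTree V, Explains T σ E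

/-- `(E,σ)` is binary-explainable. -/
def BinaryExplainable (E : V → V → Prop) (σ : V → C) : Prop :=
  ∃ T : PhyloTree V, T.IsBinary ∧ Explains T σ E

/-- The informative triples `R(G,σ)`: `(a,b,b')` encodes `ab|b'`. -/
def informativeTriples (E : V → V → Prop) (σ : V → C) : Set (V × V × V) :=
  {t | σ t.1 ≠ σ t.2.1 ∧ σ t.2.1 = σ t.2.2 ∧ E t.1 t.2.1 ∧ ¬ E t.1 t.2.2}

/-- The forbidden triples `F(G,σ)`: `(a,b,b')` encodes `ab|b'`. -/
def forbiddenTriples (E : V → V → Prop) (σ : V → C) : Set (V × V × V) :=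
  {t | σ t.1 ≠ σ t.2.1 ∧ σ t.2.1 = σ t.2.2 ∧ t.2.1 ≠ t.2.2 ∧ E t.1 t.2.1 ∧ E t.1 t.2.2}

/-- The extended triple set `R^bin(G,σ) = R(G,σ) ∪ {bb'|a : ab|b' ∈ F(G,σ)}`. -/
def Rbin (E : V → V → Prop) (σ : V → C) : Set (V × V × V) :=
  informativeTriples E σ ∪ {t | (t.2.2, t.1, t.2.1) ∈ forbiddenTriples E σ}

/-- Properly colored: arcs only between vertices of distinct colors. -/
def ProperlyColored (E : V → V → Prop) (σ : V → C) : Prop :=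
  ∀ x y, E x y → σ x ≠ σ y

/-- sf-colored: properly colored and every vertex has, for each color (of the graph)
different from its own, at least one out-neighbor of that color. -/
def SfColored (E : V → V → Prop) (σ : V → C) : Prop :=
  ProperlyColored E σ ∧ ∀ x y : V, σ y ≠ σ x → ∃ z, E x z ∧ σ z = σ y

/-- A triple set is consistent if some tree displays all of its triples. -/
def Consistent (R : Set (V × V × V)) : Prop :=
  ∃ T : PhyloTree V, T.DisplaysSet R

/-- The closure `cl(R)`: all triples displayed by every tree displaying `R`. -/
def tripleClosure (R : Set (V × V × V)) : Set (V × V × V) :=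
  {t | ∀ T : PhyloTree V, T.DisplaysSet R → T.Displays t.1 t.2.1 t.2.2}

/-- `(T,σ)` is a least resolved tree for `(E,σ)`: it explains `(E,σ)` and no tree
obtained from it by contracting an edge (i.e. by removing a non-root inner cluster)
explains `(E,σ)`. -/
def IsLRT (T : PhyloTree V) (σ : V → C) (E : V → V → Prop) : Prop :=
  Explains T σ E ∧
    ∀ A ∈ T.clusters, A ≠ Set.univ → 1 < A.ncard →
      ∀ T' : PhyloTree V, T'.clusters = T.clusters \ {A} → ¬ Explains T' σ E

end BMG

section Aho

variable {V : Type*}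

/-- Adjacency in the Aho graph `[R,L]`: `x` and `y` are joined whenever `xy|z ∈ R`
for some `z ∈ L` (only triples with all leaves in `L` are taken into account). -/
def ahoAdj (R : Set (V × V × V)) (L : Set V) (x y : V) : Prop :=
  x ∈ L ∧ y ∈ L ∧ ∃ z ∈ L, (x, y, z) ∈ R ∨ (y, x, z) ∈ R

/-- The vertex set of the connected component of `x` in the Aho graph `[R,L]`. -/
def ahoComponent (R : Set (V × V × V)) (L : Set V) (x : V) : Set V :=
  {y | Relation.ReflTransGen (ahoAdj R L) x y}

/-- The clusters of the Aho tree `Aho(R, V)`: the full leaf set, and recursively the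
connected components of the Aho graphs. -/
inductive IsAhoCluster (R : Set (V × V × V)) : Set V → Prop
  | univ : IsAhoCluster R Set.univ
  | component {L : Set V} {x : V} :
      IsAhoCluster R L → x ∈ L → IsAhoCluster R (ahoComponent R L x)

/-- `T` is the Aho tree (`BUILD` tree) of the triple set `R` on the full leaf set. -/
def IsAhoTree (R : Set (V × V × V)) (T : PhyloTree V) : Prop :=
  T.clusters = {A | IsAhoCluster R A}

/-- The union of the leaf sets of the triples in `R`. -/
def tripleLeaves (R : Set (V × V × V)) : Set V :=
  {v | ∃ t ∈ R, v = t.1 ∨ v = t.2.1 ∨ v = t.2.2}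

end Aho

section Stmt11Aux

open Relation

variable {V Γ : Type*}

/-! ### Basic cluster/lca infrastructure -/

lemma cluster_chain (T : PhyloTree V) {A B : Set V} (hA : A ∈ T.clusters)
    (hB : B ∈ T.clusters) {x : V} (hxA : x ∈ A) (hxB : x ∈ B) : A ⊆ B ∨ B ⊆ A := by
  rcases T.nested A hA B hB with h | h | h
  · exact Or.inl h
  · exact Or.inr h
  · exact absurd hxB (Set.disjoint_left.mp h hxA)

lemma exists_least_cluster [Fintype V] (T : PhyloTree V) (𝒞 : Set (Set V))
    (hsub : 𝒞 ⊆ T.clusters) {x : V} (hx : ∀ A ∈ 𝒞, x ∈ A) (hne : 𝒞.Nonempty) :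
    ∃ B ∈ 𝒞, ∀ A ∈ 𝒞, B ⊆ A := by
  obtain ⟨B, hB, hmin⟩ := Set.Finite.exists_minimalFor id 𝒞 (Set.toFinite 𝒞) hne
  refine ⟨B, hB, fun A hA => ?_⟩
  rcases cluster_chain T (hsub hB) (hsub hA) (hx B hB) (hx A hA) with h | h
  · exact h
  · exact hmin hA h

lemma lca_subset (T : PhyloTree V) {x y : V} {A : Set V} (hA : A ∈ T.clusters)
    (hx : x ∈ A) (hy : y ∈ A) : T.lca x y ⊆ A :=
  Set.sInter_subset_of_mem ⟨hA, hx, hy⟩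

lemma lca_spec [Fintype V] (T : PhyloTree V) (x y : V) :
    T.lca x y ∈ T.clusters ∧ x ∈ T.lca x y ∧ y ∈ T.lca x y := by
  obtain ⟨B, hB, hmin⟩ := exists_least_cluster T {A | A ∈ T.clusters ∧ x ∈ A ∧ y ∈ A}
    (fun A hA => hA.1) (fun A hA => hA.2.1) ⟨Set.univ, T.univ_mem, Set.mem_univ x, Set.mem_univ y⟩
  have h : T.lca x y = B := by
    apply subset_antisymm (Set.sInter_subset_of_mem hB)
    exact Set.subset_sInter (fun A hA => hmin A hA)
  rw [h]; exact hB

lemma lca_comm (T : PhyloTree V) (x y : V) : T.lca x y = T.lca y x := by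
  apply subset_antisymm
  · exact Set.subset_sInter (fun A hA => Set.sInter_subset_of_mem ⟨hA.1, hA.2.2, hA.2.1⟩)
  · exact Set.subset_sInter (fun A hA => Set.sInter_subset_of_mem ⟨hA.1, hA.2.2, hA.2.1⟩)

/-- If `b` is a best match of `a` and some leaf of `b`'s color lies in a cluster `W ∋ a`,
then `b ∈ W`. -/
lemma bm_mem [Fintype V] (T : PhyloTree V) (σ : V → Γ) {a b y₁ : V} {W : Set V}
    (hW : W ∈ T.clusters) (hbm : bestMatch T σ a b) (ha : a ∈ W) (hy : y₁ ∈ W)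
    (hσ : σ y₁ = σ b) : b ∈ W := by
  have h1 := hbm.2 y₁ hσ
  have h2 : T.lca a y₁ ⊆ W := lca_subset T hW ha hy
  exact h2 (h1 ((lca_spec T a b).2.2))

lemma exists_bestMatch [Fintype V] (T : PhyloTree V) (σ : V → Γ) (x : V) (c : Γ)
    (hc : c ≠ σ x) {w₀ : V} (hw₀ : σ w₀ = c) :
    ∃ z, σ z = c ∧ bestMatch T σ x z := by
  classical
  obtain ⟨z, hz, hmin⟩ := Set.Finite.exists_minimalFor (fun w => T.lca x w)
    {w | σ w = c} (Set.toFinite _) ⟨w₀, hw₀⟩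
  refine ⟨z, hz, ⟨fun h => hc ((h.trans hz).symm ▸ rfl), fun y' hy' => ?_⟩⟩
  · have hy'S : y' ∈ {w | σ w = c} := hy'.trans hz
    rcases cluster_chain T (lca_spec T x z).1 (lca_spec T x y').1
      (lca_spec T x z).2.1 (lca_spec T x y').2.1 with h | h
    · exact h
    · exact hmin hy'S h

lemma sandwich (T : PhyloTree V) {W M M₁ M₂ : Set V} (hW : W ∈ T.clusters)
    (hM₁ : M₁ ∈ T.clusters) (hM₂ : M₂ ∈ T.clusters) (hdisj : Disjoint M₁ M₂)
    (hunion : M₁ ∪ M₂ = M) (h1 : M₁ ⊆ W) (h2 : W ⊆ M) : W = M₁ ∨ W = M := by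
  rcases T.nested W hW M₂ hM₂ with h | h | h
  · exfalso
    obtain ⟨u, hu⟩ := T.nonempty_of_mem M₁ hM₁
    exact Set.disjoint_left.mp hdisj hu (h (h1 hu))
  · right
    apply subset_antisymm h2
    rw [← hunion]
    exact Set.union_subset h1 h
  · left
    apply subset_antisymm _ h1
    intro u hu
    have : u ∈ M₁ ∪ M₂ := by rw [hunion]; exact h2 hu
    rcases this with h' | h'
    · exact h'
    · exact absurd h' (Set.disjoint_left.mp h hu)

/-! ### Aho component infrastructure -/

lemma ahoAdj_symm {R : Set (V × V × V)} {L : Set V} {a b : V}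
    (h : ahoAdj R L a b) : ahoAdj R L b a := by
  obtain ⟨h1, h2, z, hz, h3⟩ := h
  exact ⟨h2, h1, z, hz, h3.symm⟩

lemma rtg_symm {R : Set (V × V × V)} {L : Set V} {a b : V}
    (h : Relation.ReflTransGen (ahoAdj R L) a b) :
    Relation.ReflTransGen (ahoAdj R L) b a := by
  induction h with
  | refl => exact Relation.ReflTransGen.refl
  | tail _ h2 ih =>
    exact Relation.ReflTransGen.trans (Relation.ReflTransGen.single (ahoAdj_symm h2)) ih

lemma mem_comp_self (R : Set (V × V × V)) (L : Set V) (x : V) :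
    x ∈ ahoComponent R L x := Relation.ReflTransGen.refl

lemma comp_subset {R : Set (V × V × V)} {L : Set V} {x : V} (hx : x ∈ L) :
    ahoComponent R L x ⊆ L := by
  intro y hy
  induction (hy : Relation.ReflTransGen (ahoAdj R L) x y) with
  | refl => exact hx
  | tail _ h2 _ => exact h2.2.1

lemma comp_eq_of_mem {R : Set (V × V × V)} {L : Set V} {x y : V}
    (hy : y ∈ ahoComponent R L x) : ahoComponent R L x = ahoComponent R L y := by
  ext w
  constructor
  · intro hw
    exact Relation.ReflTransGen.trans (rtg_symm hy) hw
  · intro hw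
    exact Relation.ReflTransGen.trans hy hw

/-- The canonical decreasing chain of iterated Aho components over a fixed leaf. -/
def ahoIter (R : Set (V × V × V)) (x : V) : ℕ → Set V
  | 0 => Set.univ
  | n + 1 => ahoComponent R (ahoIter R x n) x

lemma mem_ahoIter (R : Set (V × V × V)) (x : V) : ∀ n, x ∈ ahoIter R x n
  | 0 => Set.mem_univ x
  | _ + 1 => mem_comp_self _ _ _

lemma ahoIter_succ_subset (R : Set (V × V × V)) (x : V) (n : ℕ) :
    ahoIter R x (n + 1) ⊆ ahoIter R x n :=
  comp_subset (mem_ahoIter R x n)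

lemma ahoIter_antitone (R : Set (V × V × V)) (x : V) {m n : ℕ} (h : m ≤ n) :
    ahoIter R x n ⊆ ahoIter R x m := by
  induction h with
  | refl => exact subset_rfl
  | @step k h ih => exact (ahoIter_succ_subset R x k).trans ih

/-- Every Aho cluster containing `x` is a member of the canonical chain of `x`. -/
lemma aho_eq_iter {R : Set (V × V × V)} {A : Set V} (hA : IsAhoCluster R A) :
    ∀ x ∈ A, ∃ n, A = ahoIter R x n := by
  induction hA with
  | univ => exact fun x _ => ⟨0, rfl⟩
  | @component L w hL hw ih =>
    intro x hx
    have hxL : x ∈ L := comp_subset hw hx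
    obtain ⟨n, hn⟩ := ih x hxL
    refine ⟨n + 1, ?_⟩
    have h := comp_eq_of_mem hx
    rw [h]
    show ahoComponent R L x = ahoComponent R (ahoIter R x n) x
    rw [← hn]

lemma subset_comp_of_ssubset {R : Set (V × V × V)} {W L : Set V}
    (hW : IsAhoCluster R W) (hL : IsAhoCluster R L) {x : V}
    (hxW : x ∈ W) (hxL : x ∈ L) (hss : W ⊂ L) : W ⊆ ahoComponent R L x := by
  obtain ⟨m, hm⟩ := aho_eq_iter hW x hxW
  obtain ⟨n, hn⟩ := aho_eq_iter hL x hxL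
  rcases le_or_gt m n with h | h
  · exfalso
    apply hss.not_subset
    rw [hm, hn]
    exact ahoIter_antitone R x h
  · have h1 : W ⊆ ahoIter R x (n + 1) := by
      rw [hm]; exact ahoIter_antitone R x (Nat.succ_le_of_lt h)
    have h2 : ahoIter R x (n + 1) = ahoComponent R L x := by
      show ahoComponent R (ahoIter R x n) x = ahoComponent R L x
      rw [← hn]
    rwa [h2] at h1

lemma subset_lca_of_not_mem_comp [Fintype V] {R : Set (V × V × V)} (T : PhyloTree V)
    (hT : IsAhoTree R T) {L : Set V} (hLa : IsAhoCluster R L) {a y : V}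
    (ha : a ∈ L) (hy : y ∉ ahoComponent R L a) : L ⊆ T.lca a y := by
  have hLc : L ∈ T.clusters := by rw [hT]; exact hLa
  obtain ⟨hWc, haW, hyW⟩ := lca_spec T a y
  rcases cluster_chain T hWc hLc haW ha with h | h
  · by_cases heq : T.lca a y = L
    · exact heq.ge
    · exfalso
      have hWa : IsAhoCluster R (T.lca a y) := by rw [hT] at hWc; exact hWc
      exact hy (subset_comp_of_ssubset hWa hLa haW ha
        (Set.ssubset_iff_subset_ne.mpr ⟨h, heq⟩) hyW)
  · exact h

/-- Best-match criterion in the Aho tree: if `a`'s component in `[R,L]` contains no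
leaf of `q`'s color, then `q ∈ L` is a best match of `a`. -/
lemma bmt [Fintype V] {R : Set (V × V × V)} (T : PhyloTree V) (σ : V → Γ)
    (hT : IsAhoTree R T) {Lc : Set V} (hLa : IsAhoCluster R Lc) {a q : V}
    (ha : a ∈ Lc) (hq : q ∈ Lc) (hσ : σ a ≠ σ q)
    (hnone : ∀ w ∈ ahoComponent R Lc a, σ w ≠ σ q) : bestMatch T σ a q := by
  have hLc' : Lc ∈ T.clusters := by rw [hT]; exact hLa
  refine ⟨hσ, fun y' hy' => ?_⟩
  have h1 : T.lca a q ⊆ Lc := lca_subset T hLc' ha hq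
  have h2 : Lc ⊆ T.lca a y' :=
    subset_lca_of_not_mem_comp T hT hLa ha (fun hmem => hnone y' hmem hy')
  exact h1.trans h2

/-- Conversely: if `b ∉ comp(a)` is a best match of `a`, then `a`'s component
contains no leaf of `b`'s color. -/
lemma bmt2 [Fintype V] {R : Set (V × V × V)} (T : PhyloTree V) (σ : V → Γ)
    (hT : IsAhoTree R T) {Lc : Set V} (hLa : IsAhoCluster R Lc) {a b : V}
    (ha : a ∈ Lc) (hbm : bestMatch T σ a b) (hb : b ∉ ahoComponent R Lc a) :
    ∀ y ∈ ahoComponent R Lc a, σ y ≠ σ b := by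
  intro y hy hσ
  have hcomp : ahoComponent R Lc a ∈ T.clusters := by
    rw [hT]; exact IsAhoCluster.component hLa ha
  have h1 := hbm.2 y hσ
  have h2 : T.lca a y ⊆ ahoComponent R Lc a :=
    lca_subset T hcomp (mem_comp_self R Lc a) hy
  exact hb (h2 (h1 ((lca_spec T a b).2.2)))

/-! ### Triples of `Rbin`, separation, displaying -/

lemma rbin_ne {E : V → V → Prop} {σ : V → Γ} {t : V × V × V} (ht : t ∈ Rbin E σ) :
    t.1 ≠ t.2.1 ∧ t.1 ≠ t.2.2 ∧ t.2.1 ≠ t.2.2 := by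
  rcases ht with h | h
  · obtain ⟨h1, h2, h3, h4⟩ := h
    refine ⟨fun e => h1 (congrArg σ e), fun e => h1 ?_, fun e => h4 (e ▸ h3)⟩
    rw [h2]; exact congrArg σ e
  · obtain ⟨h1, h2, h3, _, _⟩ := h
    exact ⟨h3, fun e => h1 (congrArg σ e.symm),
      fun e => h1 ((congrArg σ e.symm).trans h2.symm)⟩

lemma displays_of_sep [Fintype V] (T₂ : PhyloTree V) {x y z : V} {P : Set V}
    (hxy : x ≠ y) (hxz : x ≠ z) (hyz : y ≠ z) (hP : P ∈ T₂.clusters)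
    (hx : x ∈ P) (hy : y ∈ P) (hz : z ∉ P) : T₂.Displays x y z := by
  obtain ⟨hAc, hxA, hzA⟩ := lca_spec T₂ x z
  obtain ⟨hBc, hyB, hzB⟩ := lca_spec T₂ y z
  have hPA : P ⊆ T₂.lca x z := by
    rcases cluster_chain T₂ hAc hP hxA hx with h | h
    · exact absurd (h hzA) hz
    · exact h
  have hPB : P ⊆ T₂.lca y z := by
    rcases cluster_chain T₂ hBc hP hyB hy with h | h
    · exact absurd (h hzB) hz
    · exact h
  have hAB : T₂.lca x z = T₂.lca y z := by
    apply subset_antisymm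
    · exact lca_subset T₂ hBc (hPB hx) hzB
    · exact lca_subset T₂ hAc (hPA hy) hzA
  refine ⟨hxy, hxz, hyz, ?_, hAB⟩
  have hsub : T₂.lca x y ⊆ T₂.lca x z := (lca_subset T₂ hP hx hy).trans hPA
  refine Set.ssubset_iff_subset_ne.mpr ⟨hsub, fun e => hz ?_⟩
  exact lca_subset T₂ hP hx hy (by rw [e]; exact hzA)

/-- Separation: for every triple `xy|z` of `R`, `z` does not lie below `lca_T(x,y)`
in the Aho tree `T` of `R`. -/
lemma sep [Fintype V] {R : Set (V × V × V)} (T : PhyloTree V) (hT : IsAhoTree R T)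
    {x y z : V} (ht : (x, y, z) ∈ R) (hne : x ≠ y) : z ∉ T.lca x y := by
  intro hz
  obtain ⟨hPc, hxP, hyP⟩ := lca_spec T x y
  have hPa : IsAhoCluster R (T.lca x y) := by rw [hT] at hPc; exact hPc
  have hadj : ahoAdj R (T.lca x y) x y := ⟨hxP, hyP, z, hz, Or.inl ht⟩
  have hyK : y ∈ ahoComponent R (T.lca x y) x := Relation.ReflTransGen.single hadj
  have hKc : ahoComponent R (T.lca x y) x ∈ T.clusters := by
    rw [hT]; exact IsAhoCluster.component hPa hxP
  have hPK : T.lca x y ⊆ ahoComponent R (T.lca x y) x :=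
    lca_subset T hKc (mem_comp_self R _ x) hyK
  have hKP : ahoComponent R (T.lca x y) x = T.lca x y :=
    subset_antisymm (comp_subset hxP) hPK
  obtain ⟨n, hn⟩ := aho_eq_iter hPa x hxP
  have hstab : ∀ m, ahoIter R x (n + m) = T.lca x y := by
    intro m
    induction m with
    | zero => exact hn.symm
    | succ m ih =>
      show ahoComponent R (ahoIter R x (n + m)) x = T.lca x y
      rw [ih]; exact hKP
  have hsx : IsAhoCluster R {x} := by
    have h := T.singleton_mem x
    rw [hT] at h; exact h
  obtain ⟨k, hk⟩ := aho_eq_iter hsx x rfl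
  rcases le_total k n with h | h
  · have hPx : T.lca x y ⊆ {x} := by
      rw [hn, hk]; exact ahoIter_antitone R x h
    exact hne (hPx hyP).symm
  · have h1 : ahoIter R x k = T.lca x y := by
      have h2 := hstab (k - n)
      rwa [Nat.add_sub_cancel' h] at h2
    have h3 : ({x} : Set V) = T.lca x y := hk.trans h1
    rw [← h3] at hyP
    exact hne hyP.symm

/-- A tree displaying all of `Rbin` explains `(E,σ)` (for sf-colored `E`). -/
lemma explains_of_displays [Fintype V] (T₂ : PhyloTree V) (σ : V → Γ) (E : V → V → Prop)
    (hpc : ProperlyColored E σ)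
    (hrich : ∀ x y : V, σ y ≠ σ x → ∃ z, E x z ∧ σ z = σ y)
    (hd : T₂.DisplaysSet (Rbin E σ)) : Explains T₂ σ E := by
  intro x y
  constructor
  · intro hxy
    refine ⟨hpc x y hxy, fun y' hy' => ?_⟩
    by_contra hns
    by_cases hE : E x y'
    · have hyy' : y ≠ y' := by rintro rfl; exact hns subset_rfl
      have hF : ((x, y, y') : V × V × V) ∈ forbiddenTriples E σ :=
        ⟨hpc x y hxy, hy'.symm, hyy', hxy, hE⟩
      have hdisp := hd (y, y', x) (Or.inr hF)
      have heq := hdisp.2.2.2.2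
      rw [lca_comm T₂ y x, lca_comm T₂ y' x] at heq
      exact hns heq.le
    · have hI : ((x, y, y') : V × V × V) ∈ informativeTriples E σ :=
        ⟨hpc x y hxy, hy'.symm, hxy, hE⟩
      have hdisp := hd (x, y, y') (Or.inl hI)
      exact hns hdisp.2.2.2.1.subset
  · intro hbm
    obtain ⟨z, hEz, hσz⟩ := hrich x y (Ne.symm hbm.1)
    by_contra hnE
    have hI : ((x, z, y) : V × V × V) ∈ informativeTriples E σ :=
      ⟨fun h => hbm.1 (h.trans hσz), hσz, hEz, hnE⟩
    have hdisp := hd (x, z, y) (Or.inl hI)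
    exact hdisp.2.2.2.1.not_subset (hbm.2 z hσz)

/-! ### Crossing edges -/

lemma exists_crossing {R : Set (V × V × V)} {L : Set V} {x : V} (hx : x ∈ L)
    {M₁ M₂ : Set V} (hdisj : Disjoint M₁ M₂)
    (hsub : ahoComponent R L x ⊆ M₁ ∪ M₂) {p₀ q₀ : V}
    (hp₀ : p₀ ∈ ahoComponent R L x) (hp₀₁ : p₀ ∈ M₁)
    (hq₀ : q₀ ∈ ahoComponent R L x) (hq₀₂ : q₀ ∈ M₂) :
    ∃ p q, p ∈ ahoComponent R L x ∧ p ∈ M₁ ∧ q ∈ ahoComponent R L x ∧ q ∈ M₂ ∧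
      ahoAdj R L p q := by
  by_contra hcon
  push_neg at hcon
  have hRTG : Relation.ReflTransGen (ahoAdj R L) p₀ q₀ := by
    have h := comp_eq_of_mem hp₀
    rw [h] at hq₀
    exact hq₀
  have hcompeq : ahoComponent R L x = ahoComponent R L p₀ := comp_eq_of_mem hp₀
  have key : ∀ b, Relation.ReflTransGen (ahoAdj R L) p₀ b → b ∈ M₁ := by
    intro b hb
    induction hb with
    | refl => exact hp₀₁
    | @tail b c hab hbc ih =>
      have hbC : b ∈ ahoComponent R L x := by rw [hcompeq]; exact hab
      have hcC : c ∈ ahoComponent R L x := by rw [hcompeq]; exact hab.tail hbc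
      rcases hsub hcC with h | h
      · exact h
      · exact absurd hbc (hcon b c hbC ih hcC h)
  exact Set.disjoint_left.mp hdisj (key q₀ hRTG) hq₀₂

end Stmt11Aux

section Stmt11Main

open Relation

variable {V Γ : Type*}

/-- Case of an informative crossing triple `(p,q,y₀)`: impossible. -/
lemma caseI [Fintype V] (T T' : PhyloTree V) (σ : V → Γ) (E : V → V → Prop)
    (hT : IsAhoTree (Rbin E σ) T)
    (hTex : Explains T σ E) (hT'ex : Explains T' σ E)
    {L : Set V} (hLa : IsAhoCluster (Rbin E σ) L) {x : V} (hx : x ∈ L)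
    {M M₁ M₂ : Set V} (hM : M ∈ T'.clusters) (hM₁ : M₁ ∈ T'.clusters)
    (hM₂ : M₂ ∈ T'.clusters) (hdisj : Disjoint M₁ M₂) (hunion : M₁ ∪ M₂ = M)
    (hML : M ⊆ L) (hCM : ahoComponent (Rbin E σ) L x ⊆ M)
    {z : V} (hzM : z ∈ M) (hzC : z ∉ ahoComponent (Rbin E σ) L x)
    {p q y₀ : V} (hpC : p ∈ ahoComponent (Rbin E σ) L x) (hpM₁ : p ∈ M₁)
    (hqC : q ∈ ahoComponent (Rbin E σ) L x) (hqM₂ : q ∈ M₂)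
    (htrip : ((p, q, y₀) : V × V × V) ∈ informativeTriples E σ)
    (hy₀L : y₀ ∈ L) : False := by
  classical
  obtain ⟨h1, h2, h3, h4⟩ := htrip
  -- h1 : σ p ≠ σ q, h2 : σ q = σ y₀, h3 : E p q, h4 : ¬ E p y₀
  have hCa : IsAhoCluster (Rbin E σ) (ahoComponent (Rbin E σ) L x) :=
    IsAhoCluster.component hLa hx
  have hCT : ahoComponent (Rbin E σ) L x ∈ T.clusters := by rw [hT]; exact hCa
  have hpM : p ∈ M := by rw [← hunion]; exact Or.inl hpM₁
  have hqM : q ∈ M := by rw [← hunion]; exact Or.inr hqM₂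
  have hpL : p ∈ L := hML hpM
  have hqL : q ∈ L := hML hqM
  have hzL : z ∈ L := hML hzM
  -- s2: no leaf of color σ q in M₁
  have he₁ : ∀ y₁ ∈ M₁, σ y₁ ≠ σ q := by
    intro y₁ hy₁ hσ
    have hbm := (hT'ex p q).mp h3
    have hq₁ : q ∈ M₁ := bm_mem T' σ hM₁ hbm hpM₁ hy₁ hσ
    exact Set.disjoint_left.mp hdisj hq₁ hqM₂
  -- s3: p is a best match to every σq-leaf of M₂
  have hEy₂ : ∀ y ∈ M₂, σ y = σ q → E p y := by
    intro y hy hσy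
    apply (hT'ex p y).mpr
    refine ⟨fun h => h1 (h.trans hσy), fun y' hy' => ?_⟩
    have hy'q : σ y' = σ q := hy'.trans hσy
    have hyM : y ∈ M := by rw [← hunion]; exact Or.inr hy
    have hlpy : T'.lca p y ⊆ M := lca_subset T' hM hpM hyM
    rcases cluster_chain T' (lca_spec T' p y').1 hM₁ (lca_spec T' p y').2.1 hpM₁ with h | h
    · exact absurd hy'q (he₁ y' (h ((lca_spec T' p y').2.2)))
    · rcases cluster_chain T' (lca_spec T' p y').1 hM (lca_spec T' p y').2.1 hpM with h' | h'
      · rcases sandwich T' (lca_spec T' p y').1 hM₁ hM₂ hdisj hunion h h' with he | he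
        · exact absurd hy'q (he₁ y' (he ▸ (lca_spec T' p y').2.2))
        · rw [he]; exact hlpy
      · exact hlpy.trans h'
  -- s4
  have hy₀M : y₀ ∉ M := by
    intro h
    have h' : y₀ ∈ M₁ ∪ M₂ := by rwa [hunion]
    rcases h' with h' | h'
    · exact he₁ y₀ h' h2.symm
    · exact h4 (hEy₂ y₀ h' h2.symm)
  have hy₀C : y₀ ∉ ahoComponent (Rbin E σ) L x := fun h => hy₀M (hCM h)
  -- s6: σq-leaves of M₂ lie in C
  have heM₂C : ∀ y ∈ M₂, σ y = σ q → y ∈ ahoComponent (Rbin E σ) L x := by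
    intro y hy hσy
    have hbmT := (hTex p y).mp (hEy₂ y hy hσy)
    have h5 := hbmT.2 q hσy.symm
    have h6 : T.lca p q ⊆ ahoComponent (Rbin E σ) L x := lca_subset T hCT hpC hqC
    exact h6 (h5 ((lca_spec T p y).2.2))
  -- s7
  have hσz : σ z ≠ σ q := by
    intro h
    have h' : z ∈ M₁ ∪ M₂ := by rwa [hunion]
    rcases h' with h' | h'
    · exact he₁ z h' h
    · exact hzC (heM₂C z h' h)
  -- s8: z's component contains a σq-leaf
  have hcompz : ∃ w₁ ∈ ahoComponent (Rbin E σ) L z, σ w₁ = σ q := by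
    by_contra hnone
    push_neg at hnone
    have hbmq : bestMatch T σ z q := bmt T σ hT hLa hzL hqL hσz hnone
    have hbmy₀ : bestMatch T σ z y₀ :=
      bmt T σ hT hLa hzL hy₀L (fun h => hσz (h.trans h2.symm))
        (fun w hw hσw => hnone w hw (hσw.trans h2.symm))
    have hEzq := (hTex z q).mpr hbmq
    have hEzy₀ := (hTex z y₀).mpr hbmy₀
    have hqy₀ : q ≠ y₀ := fun h => hy₀M (h ▸ hqM)
    have hF : ((z, q, y₀) : V × V × V) ∈ forbiddenTriples E σ :=
      ⟨hσz, h2, hqy₀, hEzq, hEzy₀⟩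
    have hR : ((q, y₀, z) : V × V × V) ∈ Rbin E σ := Or.inr hF
    have hadj : ahoAdj (Rbin E σ) L q y₀ := ⟨hqL, hy₀L, z, hzL, Or.inl hR⟩
    have hmem : y₀ ∈ ahoComponent (Rbin E σ) L q := Relation.ReflTransGen.single hadj
    rw [← comp_eq_of_mem hqC] at hmem
    exact hy₀C hmem
  obtain ⟨w₁, hw₁, hσw₁⟩ := hcompz
  -- s9: z's actual best match of color σq, located in z's component
  obtain ⟨yz, hσyz, hbmyz⟩ := exists_bestMatch T σ z (σ q) (Ne.symm hσz) hσw₁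
  have hEzyz := (hTex z yz).mpr hbmyz
  have hcompzT : ahoComponent (Rbin E σ) L z ∈ T.clusters := by
    rw [hT]; exact IsAhoCluster.component hLa hzL
  have hyzcomp : yz ∈ ahoComponent (Rbin E σ) L z := by
    have h7 := hbmyz.2 w₁ (hσw₁.trans hσyz.symm)
    exact lca_subset T hcompzT (mem_comp_self _ _ _) hw₁ (h7 ((lca_spec T z yz).2.2))
  -- s10
  have hyzM : yz ∉ M := by
    intro h
    have h' : yz ∈ M₁ ∪ M₂ := by rwa [hunion]
    rcases h' with h' | h'
    · exact he₁ yz h' hσyz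
    · have hyzC : yz ∈ ahoComponent (Rbin E σ) L x := heM₂C yz h' hσyz
      have e1 := comp_eq_of_mem hyzcomp
      have e2 := comp_eq_of_mem hyzC
      exact hzC (by rw [e2, ← e1]; exact mem_comp_self _ _ _)
  -- s11: contradiction via T'
  have hbm' := (hT'ex z yz).mp hEzyz
  exact hyzM (bm_mem T' σ hM hbm' hzM hqM hσyz.symm)

/-- Case of a forbidden-derived crossing triple: impossible. -/
lemma caseF [Fintype V] (T T' : PhyloTree V) (σ : V → Γ) (E : V → V → Prop)
    (hT : IsAhoTree (Rbin E σ) T)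
    (hTex : Explains T σ E) (hT'ex : Explains T' σ E)
    {L : Set V} (hLa : IsAhoCluster (Rbin E σ) L) {x : V} (hx : x ∈ L)
    {M M₁ M₂ : Set V} (hM : M ∈ T'.clusters) (hM₁ : M₁ ∈ T'.clusters)
    (hM₂ : M₂ ∈ T'.clusters) (hdisj : Disjoint M₁ M₂) (hunion : M₁ ∪ M₂ = M)
    (hML : M ⊆ L) (hCM : ahoComponent (Rbin E σ) L x ⊆ M)
    {z : V} (hzM : z ∈ M) (hzC : z ∉ ahoComponent (Rbin E σ) L x)
    {p q w : V} (hpC : p ∈ ahoComponent (Rbin E σ) L x) (hpM₁ : p ∈ M₁)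
    (hqC : q ∈ ahoComponent (Rbin E σ) L x) (hqM₂ : q ∈ M₂)
    (htrip : ((w, p, q) : V × V × V) ∈ forbiddenTriples E σ)
    (hwL : w ∈ L) : False := by
  classical
  obtain ⟨g1, g2, g3, g4, g5⟩ := htrip
  -- g1 : σ w ≠ σ p, g2 : σ p = σ q, g3 : p ≠ q, g4 : E w p, g5 : E w q
  have hpM : p ∈ M := by rw [← hunion]; exact Or.inl hpM₁
  have hqM : q ∈ M := by rw [← hunion]; exact Or.inr hqM₂
  have hpL : p ∈ L := hML hpM
  have hqL : q ∈ L := hML hqM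
  have hzL : z ∈ L := hML hzM
  -- f1
  have hwM : w ∉ M := by
    intro h
    have h' : w ∈ M₁ ∪ M₂ := by rwa [hunion]
    rcases h' with h' | h'
    · have hq₁ : q ∈ M₁ := bm_mem T' σ hM₁ ((hT'ex w q).mp g5) h' hpM₁ g2
      exact Set.disjoint_left.mp hdisj hq₁ hqM₂
    · have hp₂ : p ∈ M₂ := bm_mem T' σ hM₂ ((hT'ex w p).mp g4) h' hqM₂ g2.symm
      exact Set.disjoint_left.mp hdisj hpM₁ hp₂
  have hwC : w ∉ ahoComponent (Rbin E σ) L x := fun h => hwM (hCM h)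
  -- f3
  have hnonew : ∀ y ∈ ahoComponent (Rbin E σ) L w, σ y ≠ σ p := by
    apply bmt2 T σ hT hLa hwL ((hTex w p).mp g4)
    intro hmem
    have e1 := comp_eq_of_mem hmem
    have e2 := comp_eq_of_mem hpC
    exact hwC (by rw [e2, ← e1]; exact mem_comp_self _ _ _)
  -- f4: all σp-leaves of L lie in C
  have heL : ∀ y, y ∈ L → σ y = σ p → y ∈ ahoComponent (Rbin E σ) L x := by
    intro y hyL hσy
    by_cases hyp : y = p
    · rw [hyp]; exact hpC
    · have hσwy : σ w ≠ σ y := fun h => g1 (h.trans hσy)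
      have hbm : bestMatch T σ w y :=
        bmt T σ hT hLa hwL hyL hσwy (fun u hu hσu => hnonew u hu (hσu.trans hσy))
      have hEwy := (hTex w y).mpr hbm
      have hF : ((w, p, y) : V × V × V) ∈ forbiddenTriples E σ :=
        ⟨g1, hσy.symm, Ne.symm hyp, g4, hEwy⟩
      have hR : ((p, y, w) : V × V × V) ∈ Rbin E σ := Or.inr hF
      have hadj : ahoAdj (Rbin E σ) L p y := ⟨hpL, hyL, w, hwL, Or.inl hR⟩
      have hmem : y ∈ ahoComponent (Rbin E σ) L p := Relation.ReflTransGen.single hadj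
      rw [← comp_eq_of_mem hpC] at hmem
      exact hmem
  -- f5
  have hσzp : σ z ≠ σ p := fun h => hzC (heL z hzL h)
  have hnonez : ∀ u ∈ ahoComponent (Rbin E σ) L z, σ u ≠ σ p := by
    intro u hu hσu
    have huL : u ∈ L := comp_subset hzL hu
    have huC : u ∈ ahoComponent (Rbin E σ) L x := heL u huL hσu
    have e1 := comp_eq_of_mem hu
    have e2 := comp_eq_of_mem huC
    exact hzC (by rw [e2, ← e1]; exact mem_comp_self _ _ _)
  have hEzp := (hTex z p).mpr (bmt T σ hT hLa hzL hpL hσzp hnonez)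
  have hEzq := (hTex z q).mpr (bmt T σ hT hLa hzL hqL (fun h => hσzp (h.trans g2.symm))
    (fun u hu hσu => hnonez u hu (hσu.trans g2.symm)))
  have h' : z ∈ M₁ ∪ M₂ := by rwa [hunion]
  rcases h' with h' | h'
  · have hq₁ : q ∈ M₁ := bm_mem T' σ hM₁ ((hT'ex z q).mp hEzq) h' hpM₁ g2
    exact Set.disjoint_left.mp hdisj hq₁ hqM₂
  · have hp₂ : p ∈ M₂ := bm_mem T' σ hM₂ ((hT'ex z p).mp hEzp) h' hqM₂ g2.symm
    exact Set.disjoint_left.mp hdisj hpM₁ hp₂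

/-- Main lemma: every Aho component of `Rbin` at an Aho cluster `L` that is also a
cluster of a binary explaining tree `T'` is itself a cluster of `T'`. -/
lemma aho_component_mem [Fintype V] (T T' : PhyloTree V) (σ : V → Γ) (E : V → V → Prop)
    (hT : IsAhoTree (Rbin E σ) T) (hTex : Explains T σ E) (hT'ex : Explains T' σ E)
    (hbin : T'.IsBinary) {L : Set V} (hLa : IsAhoCluster (Rbin E σ) L)
    (hL' : L ∈ T'.clusters) {x : V} (hx : x ∈ L) :
    ahoComponent (Rbin E σ) L x ∈ T'.clusters := by
  classical
  have hxC : x ∈ ahoComponent (Rbin E σ) L x := mem_comp_self _ L x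
  have hCL : ahoComponent (Rbin E σ) L x ⊆ L := comp_subset hx
  obtain ⟨M, hMmem, hMmin⟩ := exists_least_cluster T'
      {A | A ∈ T'.clusters ∧ ahoComponent (Rbin E σ) L x ⊆ A}
      (fun A hA => hA.1) (fun A hA => hA.2 hxC) ⟨L, hL', hCL⟩
  obtain ⟨hM, hCM⟩ := hMmem
  have hML : M ⊆ L := hMmin L ⟨hL', hCL⟩
  suffices h : M ⊆ ahoComponent (Rbin E σ) L x by
    have heq : M = ahoComponent (Rbin E σ) L x := subset_antisymm h hCM
    rw [← heq]; exact hM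
  by_contra hns
  obtain ⟨z, hzM, hzC⟩ := Set.not_subset.mp hns
  have hxz : x ≠ z := fun h => hzC (h ▸ hxC)
  have hMcard : 1 < M.ncard := by
    rw [Set.one_lt_ncard (Set.toFinite M)]
    exact ⟨x, hCM hxC, z, hzM, hxz⟩
  obtain ⟨M₁, hM₁, M₂, hM₂, hdisj, hunion, hss₁, hss₂⟩ := hbin M hM hMcard
  have hCsub : ahoComponent (Rbin E σ) L x ⊆ M₁ ∪ M₂ := by rw [hunion]; exact hCM
  have hC₁ : ∃ p, p ∈ ahoComponent (Rbin E σ) L x ∧ p ∈ M₁ := by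
    by_contra h
    push_neg at h
    have hsub2 : ahoComponent (Rbin E σ) L x ⊆ M₂ :=
      fun y hy => (hCsub hy).resolve_left (h y hy)
    exact hss₂.not_subset (hMmin M₂ ⟨hM₂, hsub2⟩)
  have hC₂ : ∃ p, p ∈ ahoComponent (Rbin E σ) L x ∧ p ∈ M₂ := by
    by_contra h
    push_neg at h
    have hsub1 : ahoComponent (Rbin E σ) L x ⊆ M₁ :=
      fun y hy => (hCsub hy).resolve_right (h y hy)
    exact hss₁.not_subset (hMmin M₁ ⟨hM₁, hsub1⟩)
  obtain ⟨p₀, hp₀C, hp₀₁⟩ := hC₁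
  obtain ⟨q₀, hq₀C, hq₀₂⟩ := hC₂
  obtain ⟨p, q, hpC, hpM₁, hqC, hqM₂, hadj⟩ :=
    exists_crossing hx hdisj hCsub hp₀C hp₀₁ hq₀C hq₀₂
  obtain ⟨hpL', hqL', w, hwL, hor⟩ := hadj
  have hunion' : M₂ ∪ M₁ = M := by rw [Set.union_comm]; exact hunion
  rcases hor with h | h
  · rcases h with hI | hFd
    · exact caseI T T' σ E hT hTex hT'ex hLa hx hM hM₁ hM₂ hdisj hunion hML hCM
        hzM hzC hpC hpM₁ hqC hqM₂ hI hwL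
    · exact caseF T T' σ E hT hTex hT'ex hLa hx hM hM₁ hM₂ hdisj hunion hML hCM
        hzM hzC hpC hpM₁ hqC hqM₂ hFd hwL
  · rcases h with hI | hFd
    · exact caseI T T' σ E hT hTex hT'ex hLa hx hM hM₂ hM₁ hdisj.symm hunion' hML hCM
        hzM hzC hqC hqM₂ hpC hpM₁ hI hwL
    · exact caseF T T' σ E hT hTex hT'ex hLa hx hM hM₂ hM₁ hdisj.symm hunion' hML hCM
        hzM hzC hqC hqM₂ hpC hpM₁ hFd hwL

end Stmt11Main

/-- Corollary: binary-iff-refinement.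
Let `(G,σ)` be a binary-explainable BMG with binary-refinable tree `(T,σ)` (the Aho
tree of `R^bin(G,σ)`). A binary tree `(T',σ)` on the vertex set of `G` explains
`(G,σ)` if and only if `(T',σ)` is a refinement of `(T,σ)`. -/
theorem stmt11 {V Γ : Type*} [Fintype V] (E : V → V → Prop) (σ : V → Γ)
    (hbe : BinaryExplainable E σ)
    (T : PhyloTree V) (hT : IsAhoTree (Rbin E σ) T)
    (T' : PhyloTree V) (hbin : T'.IsBinary) :
    Explains T' σ E ↔ T'.Refines T := by
  classical
  obtain ⟨T₀, hT₀bin, hT₀ex⟩ := hbe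
  have hpc : ProperlyColored E σ := fun x y h => ((hT₀ex x y).mp h).1
  have hrich : ∀ x y : V, σ y ≠ σ x → ∃ z, E x z ∧ σ z = σ y := by
    intro x y h
    obtain ⟨z, hσz, hbm⟩ := exists_bestMatch T₀ σ x (σ y) h (w₀ := y) rfl
    exact ⟨z, (hT₀ex x z).mpr hbm, hσz⟩
  have hexp : ∀ T₂ : PhyloTree V, T.clusters ⊆ T₂.clusters → Explains T₂ σ E := by
    intro T₂ hsub
    apply explains_of_displays T₂ σ E hpc hrich
    intro t ht
    obtain ⟨a, b, c⟩ := t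
    obtain ⟨hne1, hne2, hne3⟩ := rbin_ne ht
    have hsep : c ∉ T.lca a b := sep T hT ht hne1
    obtain ⟨hPc, hxP, hyP⟩ := lca_spec T a b
    exact displays_of_sep T₂ hne1 hne2 hne3 (hsub hPc) hxP hyP hsep
  have hTex : Explains T σ E := hexp T subset_rfl
  constructor
  · intro hT'ex
    intro A hA
    rw [hT] at hA
    have hA' : IsAhoCluster (Rbin E σ) A := hA
    clear hA
    induction hA' with
    | univ => exact T'.univ_mem
    | @component L x hL hx ih =>
      exact aho_component_mem T T' σ E hT hTex hT'ex hbin hL ih hx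
  · intro href
    exact hexp T' href
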